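/- Let A ∈ ℝ^{n×n} be a diagonal matrix with strictly positive diagonal entries and ρ > 0. Let b̄, P̄, μ̄_b, μ̄_g ∈ ℝ^n satisfy b̄ ≥ 0, μ̄_b ≥ 0, b̄ᵀμ̄_b = 0, P̄ ≥ 0, μ̄_g ≥ 0, P̄ᵀμ̄_g = 0, P̄ = g(b̄), and 1ᵀP̄ = 1ᵀP_d. Suppose ω ∈ ℝ^n and b, P_g ∈ ℝ^n with b ≥ 0, P_g ≥ 0 satisfy ωᵀAω + (b − b̄)ᵀ(g(b) − g(b̄)) + ρ(1ᵀ(P̄ − P_g))² + (b − b̄)ᵀμ̄_b + (P_g − P̄)ᵀμ̄_g = 0. Then ω = 0, 1ᵀP_g = 1ᵀP_d, and b_i = b̄_i for every index i with P̄_i > 0. -/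

import Mathlib

open Finset

noncomputable section

/-- Feasible production profiles for the dispatch problems:
power balance `1ᵀP = 1ᵀP_d` and componentwise nonnegativity. -/
def Feasible {n : ℕ} (Pd P : Fin n → ℝ) : Prop :=
  (∑ i, P i = ∑ i, Pd i) ∧ ∀ i, 0 ≤ P i

/-- `P` is an optimizer of the ISO problem for bids `b`:
it minimizes `bᵀP` over the feasible set. -/
def IsISOOpt {n : ℕ} (Pd b P : Fin n → ℝ) : Prop :=
  Feasible Pd P ∧ ∀ Q, Feasible Pd Q → ∑ i, b i * P i ≤ ∑ i, b i * Q i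

/-- `P` is a minimizer of the economic dispatch (ED) problem. -/
def IsEDOpt {n : ℕ} (C : Fin n → ℝ → ℝ) (Pd P : Fin n → ℝ) : Prop :=
  Feasible Pd P ∧ ∀ Q, Feasible Pd Q → ∑ i, C i (P i) ≤ ∑ i, C i (Q i)

/-- `(P, lam, mu)` is a KKT triple for the ED problem, with `C' i` the marginal
cost of generator `i`. -/
def IsKKT {n : ℕ} (C' : Fin n → ℝ → ℝ) (Pd P : Fin n → ℝ) (lam : ℝ)
    (mu : Fin n → ℝ) : Prop :=
  (∀ i, C' i (P i) = lam + mu i) ∧ (∑ i, P i = ∑ i, Pd i) ∧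
    (∀ i, 0 ≤ P i) ∧ (∀ i, 0 ≤ mu i) ∧ (∑ i, P i * mu i = 0)

/-- Payoff of a generator with cost `Ci` bidding `bi` and producing `Pi`. -/
def Payoff (Ci : ℝ → ℝ) (bi Pi : ℝ) : ℝ := Pi * bi - Ci Pi

/-- `bstar` is a Nash equilibrium of the inelastic electricity market game. -/
def IsNash {n : ℕ} (C : Fin n → ℝ → ℝ) (Pd bstar : Fin n → ℝ) : Prop :=
  (∀ i, 0 ≤ bstar i) ∧
  ∃ P0, IsISOOpt Pd bstar P0 ∧
    ∀ i (bi : ℝ), 0 ≤ bi → bi ≠ bstar i →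
      ∀ P, IsISOOpt Pd (Function.update bstar i bi) P →
        Payoff (C i) bi (P i) ≤ Payoff (C i) (bstar i) (P0 i)

/-- `bstar` is an efficient bid: the optimizer of the ED problem is also an
optimizer of the ISO problem for bids `bstar`, and each `Pstar i` maximizes
the profit `P ↦ P * bstar i - C i P` over `P ≥ 0`. -/
def IsEfficientBid {n : ℕ} (C : Fin n → ℝ → ℝ) (Pd bstar : Fin n → ℝ) : Prop :=
  (∀ i, 0 ≤ bstar i) ∧
  ∀ Pstar, IsEDOpt C Pd Pstar →
    IsISOOpt Pd bstar Pstar ∧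
      ∀ i, ∀ P, 0 ≤ P → Payoff (C i) (bstar i) P ≤ Payoff (C i) (bstar i) (Pstar i)

/-- Standing assumptions on a generator cost function: continuously
differentiable with derivative `Cf'`, strongly convex on `[0, ∞)`, and
nonnegative marginal cost at zero. -/
def CostAssumptions (Cf Cf' : ℝ → ℝ) : Prop :=
  (∀ x, HasDerivAt Cf (Cf' x) x) ∧ Continuous Cf' ∧
    (∃ m : ℝ, 0 < m ∧
      ∀ x y, 0 ≤ x → 0 ≤ y → (Cf' x - Cf' y) * (x - y) ≥ m * (x - y) ^ 2) ∧
    0 ≤ Cf' 0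

/-- `P` is the unique maximizer of the profit `Q ↦ β * Q - Cf Q` over `Q ≥ 0`. -/
def IsUniqueArgmaxProfit (Cf : ℝ → ℝ) (β P : ℝ) : Prop :=
  0 ≤ P ∧ (∀ Q, 0 ≤ Q → β * Q - Cf Q ≤ β * P - Cf P) ∧
    ∀ Q, 0 ≤ Q → (∀ R, 0 ≤ R → β * R - Cf R ≤ β * Q - Cf Q) → Q = P

lemma foc_aux {Cf Cf' : ℝ → ℝ} (hC : CostAssumptions Cf Cf') {β P : ℝ}
    (h : IsUniqueArgmaxProfit Cf β P) (hP : 0 < P) : Cf' P = β := by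
  obtain ⟨hd, -, -, -⟩ := hC
  have hloc : IsLocalMax (fun x => β * x - Cf x) P := by
    filter_upwards [eventually_gt_nhds hP] with x hx
    exact h.2.1 x hx.le
  have hder : HasDerivAt (fun x => β * x - Cf x) (β - Cf' P) P := by
    exact (((hasDerivAt_id P).const_mul β).sub (hd P)).congr_deriv (by simp)
  have := hloc.hasDerivAt_eq_zero hder
  linarith

lemma gmono_aux {Cf : ℝ → ℝ} {b1 b2 P1 P2 : ℝ}
    (h1 : IsUniqueArgmaxProfit Cf b1 P1) (h2 : IsUniqueArgmaxProfit Cf b2 P2) :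
    0 ≤ (b1 - b2) * (P1 - P2) := by
  have A1 := h1.2.1 P2 h2.1
  have A2 := h2.2.1 P1 h1.1
  nlinarith

/-- Characterization of the set where the Lyapunov-derivative
expression vanishes: if the sum of the (nonnegative) dissipation terms equals
zero, then the frequency deviation is zero, the power balance holds, and the
bids agree with the equilibrium bids at every strictly producing node. -/
theorem invariant_set_characterization {n : ℕ}
    (C C' : Fin n → ℝ → ℝ) (hC : ∀ i, CostAssumptions (C i) (C' i))
    (g : Fin n → ℝ → ℝ) (hg : ∀ i β, IsUniqueArgmaxProfit (C i) β (g i β))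
    (Pd : Fin n → ℝ)
    (A : Fin n → ℝ) (hA : ∀ i, 0 < A i)
    (ρ : ℝ) (hρ : 0 < ρ)
    (bbar Pbar μb μg : Fin n → ℝ)
    (hbbar : ∀ i, 0 ≤ bbar i) (hμb : ∀ i, 0 ≤ μb i)
    (hcompb : ∑ i, bbar i * μb i = 0)
    (hPbar : ∀ i, 0 ≤ Pbar i) (hμg : ∀ i, 0 ≤ μg i)
    (hcompg : ∑ i, Pbar i * μg i = 0)
    (hPg_bar : ∀ i, Pbar i = g i (bbar i))
    (hbal : ∑ i, Pbar i = ∑ i, Pd i)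
    (ω b Pg : Fin n → ℝ) (hb : ∀ i, 0 ≤ b i) (hPg : ∀ i, 0 ≤ Pg i)
    (hzero : (∑ i, ω i * (A i * ω i))
        + (∑ i, (b i - bbar i) * (g i (b i) - g i (bbar i)))
        + ρ * (∑ i, (Pbar i - Pg i)) ^ 2
        + (∑ i, (b i - bbar i) * μb i)
        + (∑ i, (Pg i - Pbar i) * μg i) = 0) :
    ω = 0 ∧ (∑ i, Pg i = ∑ i, Pd i) ∧ ∀ i, 0 < Pbar i → b i = bbar i := by
  -- pointwise complementarity
  have hcb : ∀ i, bbar i * μb i = 0 := by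
    have := (Finset.sum_eq_zero_iff_of_nonneg
      (fun i _ => mul_nonneg (hbbar i) (hμb i))).mp hcompb
    intro i; exact this i (Finset.mem_univ i)
  have hcg : ∀ i, Pbar i * μg i = 0 := by
    have := (Finset.sum_eq_zero_iff_of_nonneg
      (fun i _ => mul_nonneg (hPbar i) (hμg i))).mp hcompg
    intro i; exact this i (Finset.mem_univ i)
  -- termwise nonnegativity
  have t1 : ∀ i, 0 ≤ ω i * (A i * ω i) := by
    intro i
    have h : ω i * (A i * ω i) = A i * ω i ^ 2 := by ring
    rw [h]
    exact mul_nonneg (hA i).le (sq_nonneg _)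
  have t2 : ∀ i, 0 ≤ (b i - bbar i) * (g i (b i) - g i (bbar i)) :=
    fun i => gmono_aux (hg i (b i)) (hg i (bbar i))
  have t4 : ∀ i, 0 ≤ (b i - bbar i) * μb i := by
    intro i
    rcases eq_or_lt_of_le (hμb i) with h | h
    · simp [← h]
    · have hb0 : bbar i = 0 := by
        rcases mul_eq_zero.mp (hcb i) with h2 | h2
        · exact h2
        · exact absurd h2 h.ne'
      rw [hb0]
      simpa using mul_nonneg (hb i) (hμb i)
  have t5 : ∀ i, 0 ≤ (Pg i - Pbar i) * μg i := by
    intro i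
    rcases eq_or_lt_of_le (hμg i) with h | h
    · simp [← h]
    · have hP0 : Pbar i = 0 := by
        rcases mul_eq_zero.mp (hcg i) with h2 | h2
        · exact h2
        · exact absurd h2 h.ne'
      rw [hP0]
      simpa using mul_nonneg (hPg i) (hμg i)
  -- sum nonnegativity
  have s1 : 0 ≤ ∑ i, ω i * (A i * ω i) := Finset.sum_nonneg fun i _ => t1 i
  have s2 : 0 ≤ ∑ i, (b i - bbar i) * (g i (b i) - g i (bbar i)) :=
    Finset.sum_nonneg fun i _ => t2 i
  have s3 : 0 ≤ ρ * (∑ i, (Pbar i - Pg i)) ^ 2 := by positivity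
  have s4 : 0 ≤ ∑ i, (b i - bbar i) * μb i := Finset.sum_nonneg fun i _ => t4 i
  have s5 : 0 ≤ ∑ i, (Pg i - Pbar i) * μg i := Finset.sum_nonneg fun i _ => t5 i
  -- each block is zero
  have e1 : ∑ i, ω i * (A i * ω i) = 0 := by linarith
  have e2 : ∑ i, (b i - bbar i) * (g i (b i) - g i (bbar i)) = 0 := by linarith
  have e3 : ρ * (∑ i, (Pbar i - Pg i)) ^ 2 = 0 := by linarith
  refine ⟨?_, ?_, ?_⟩
  · funext i
    have := (Finset.sum_eq_zero_iff_of_nonneg (fun i _ => t1 i)).mp e1 i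
      (Finset.mem_univ i)
    have hAi := hA i
    by_contra hne
    have : ω i * (A i * ω i) > 0 := by
      have : ω i ≠ 0 := hne
      nlinarith [mul_pos hAi (mul_self_pos.mpr this)]
    linarith
  · have hS : ∑ i, (Pbar i - Pg i) = 0 := by
      have := mul_eq_zero.mp e3
      rcases this with h | h
      · exact absurd h hρ.ne'
      · exact pow_eq_zero_iff (by norm_num) |>.mp h
    have hsub : ∑ i, (Pbar i - Pg i) = (∑ i, Pbar i) - ∑ i, Pg i :=
      Finset.sum_sub_distrib _ _
    have : ∑ i, Pg i = ∑ i, Pbar i := by linarith [hsub ▸ hS]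
    rw [this, hbal]
  · intro i hPbi
    have hzi : (b i - bbar i) * (g i (b i) - g i (bbar i)) = 0 :=
      (Finset.sum_eq_zero_iff_of_nonneg (fun i _ => t2 i)).mp e2 i
        (Finset.mem_univ i)
    rcases mul_eq_zero.mp hzi with h | h
    · linarith
    · -- g i (b i) = g i (bbar i) = Pbar i > 0
      have hgeq : g i (b i) = g i (bbar i) := by linarith
      have hgb : g i (bbar i) = Pbar i := (hPg_bar i).symm
      have hpos : 0 < g i (b i) := by rw [hgeq, hgb]; exact hPbi
      have f1 : C' i (g i (b i)) = b i := foc_aux (hC i) (hg i (b i)) hpos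
      have f2 : C' i (g i (bbar i)) = bbar i :=
        foc_aux (hC i) (hg i (bbar i)) (by rw [hgb]; exact hPbi)
      rw [← f1, ← f2, hgeq]
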